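/- Let w₁, w₂ ∈ BV(Ω) both satisfy φ(x, Dw_i/|Dw_i|) = T·(Dw_i/|Dw_i|), |Dw_i|-a.e. in Ω, for the same measurable vector field T with φ⁰(x,T) ≤ 1 a.e., and suppose that for a.e. x ∈ Ω the norm φ(x,·) is strictly convex (so the maximizer of p ↦ T(x)·p/φ(x,p) over the unit sphere is unique whenever T(x) ≠ 0). Then on any set where both |Dw₁| and |Dw₂| are mutually absolutely continuous with respect to a common measure and T ≠ 0, the unit vectors Dw₁/|Dw₁| and Dw₂/|Dw₂| coincide a.e., i.e., all such minimizers have the same level set structure. -/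

import Mathlib

open MeasureTheory
open scoped RealInnerProductSpace ENNReal Topology

noncomputable section

abbrev Euc (n : ℕ) := EuclideanSpace ℝ (Fin n)

/-- `φ x` is a norm on `ℝⁿ`. -/
def IsNormAt {n : ℕ} (φ : Euc n → Euc n → ℝ) (x : Euc n) : Prop :=
  (∀ ξ, 0 ≤ φ x ξ) ∧ (∀ ξ, φ x ξ = 0 ↔ ξ = 0) ∧
  (∀ (c : ℝ) (ξ), φ x (c • ξ) = |c| * φ x ξ) ∧
  (∀ ξ η, φ x (ξ + η) ≤ φ x ξ + φ x η)

/-- The dual norm `φ⁰(x,ξ) = sup {ξ·p : φ(x,p) ≤ 1}`. -/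
def dualNorm {n : ℕ} (φ : Euc n → Euc n → ℝ) (x ξ : Euc n) : ℝ :=
  sSup {r | ∃ p : Euc n, φ x p ≤ 1 ∧ r = ⟪ξ, p⟫}


lemma abs_apply_le_norm {n : ℕ} (v : Euc n) (i : Fin n) : |v i| ≤ ‖v‖ := by
  rw [EuclideanSpace.norm_eq]
  have h1 : |v i| = Real.sqrt (|v i|^2) := by
    rw [Real.sqrt_sq_eq_abs, abs_abs]
  rw [h1]
  apply Real.sqrt_le_sqrt
  have : ‖v i‖ ^ 2 = |v i| ^ 2 := by rw [Real.norm_eq_abs]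
  calc |v i|^2 = ‖v i‖^2 := by rw [Real.norm_eq_abs]
    _ ≤ ∑ j, ‖v j‖^2 := Finset.single_le_sum (f := fun j => ‖v j‖^2)
        (fun j _ => sq_nonneg _) (Finset.mem_univ i)

lemma key_pointwise {n : ℕ} (φ : Euc n → Euc n → ℝ) (x : Euc n)
    (hN : IsNormAt φ x)
    (hs : ∀ p q : Euc n, φ x p = 1 → φ x q = 1 → p ≠ q →
      φ x ((1/2 : ℝ) • (p + q)) < 1)
    (T : Euc n) (hd : dualNorm φ x T ≤ 1)
    (v1 v2 : Euc n) (hn1 : ‖v1‖ = 1) (he1 : φ x v1 = ⟪T, v1⟫)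
    (hn2 : ‖v2‖ = 1) (he2 : φ x v2 = ⟪T, v2⟫) : v1 = v2 := by
  obtain ⟨hnn, hzero, hsmul, hadd⟩ := hN
  have φ0 : φ x 0 = 0 := (hzero 0).mpr rfl
  -- upper bound: φ x v ≤ C ‖v‖
  set C : ℝ := ∑ i, φ x (EuclideanSpace.single i (1:ℝ)) with hC
  have hCnn : 0 ≤ C := Finset.sum_nonneg fun i _ => hnn _
  have hub : ∀ v : Euc n, φ x v ≤ C * ‖v‖ := by
    intro v
    have hv : v = ∑ i, v i • EuclideanSpace.single i (1:ℝ) := by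
      have hb := (EuclideanSpace.basisFun (Fin n) ℝ).sum_repr v
      simp only [EuclideanSpace.basisFun_apply, EuclideanSpace.basisFun_repr] at hb
      exact hb.symm
    calc φ x v = φ x (∑ i, v i • EuclideanSpace.single i (1:ℝ)) := by rw [← hv]
      _ ≤ ∑ i, φ x (v i • EuclideanSpace.single i (1:ℝ)) :=
          Finset.le_sum_of_subadditive (φ x) φ0.le hadd _ _
      _ = ∑ i, |v i| * φ x (EuclideanSpace.single i (1:ℝ)) := by
          simp_rw [hsmul]
      _ ≤ ∑ i, ‖v‖ * φ x (EuclideanSpace.single i (1:ℝ)) := by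
          apply Finset.sum_le_sum
          intro i _
          exact mul_le_mul_of_nonneg_right (abs_apply_le_norm v i) (hnn _)
      _ = C * ‖v‖ := by rw [← Finset.mul_sum, mul_comm]
  -- Lipschitz hence continuous
  have hcont : Continuous (φ x) := by
    have hsub : ∀ p q : Euc n, φ x p - φ x q ≤ C * ‖p - q‖ := by
      intro p q
      have := hadd (p - q) q
      simp only [sub_add_cancel] at this
      linarith [hub (p - q)]
    have hneg : ∀ u : Euc n, φ x (-u) = φ x u := by
      intro u
      have := hsmul (-1) u
      simpa using this
    apply Metric.continuous_iff.mpr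
    intro p ε hε
    rcases le_or_gt C 0 with hC0 | hC0
    · refine ⟨1, one_pos, fun q _ => ?_⟩
      have h1 := hsub q p
      have h2 := hsub p q
      have hle : C * ‖q - p‖ ≤ 0 := mul_nonpos_of_nonpos_of_nonneg hC0 (norm_nonneg _)
      have hle' : C * ‖p - q‖ ≤ 0 := mul_nonpos_of_nonpos_of_nonneg hC0 (norm_nonneg _)
      rw [Real.dist_eq, abs_sub_lt_iff]
      constructor <;> linarith
    · refine ⟨ε / C, div_pos hε hC0, fun q hq => ?_⟩
      rw [Real.dist_eq, abs_sub_lt_iff]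
      have hd1 : ‖q - p‖ < ε / C := by rwa [← dist_eq_norm]
      have hd2 : ‖p - q‖ < ε / C := by rwa [norm_sub_rev]
      have h1 := hsub q p
      have h2 := hsub p q
      have k1 : C * ‖q - p‖ < ε := by
        rw [mul_comm]; exact (lt_div_iff₀ hC0).mp hd1
      have k2 : C * ‖p - q‖ < ε := by
        rw [mul_comm]; exact (lt_div_iff₀ hC0).mp hd2
      constructor <;> linarith
  -- lower bound: m ‖v‖ ≤ φ x v with m > 0
  have hsphne : (Metric.sphere (0 : Euc n) 1).Nonempty := ⟨v1, by simp [hn1]⟩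
  obtain ⟨z, hz, hmin⟩ := (isCompact_sphere (0 : Euc n) 1).exists_isMinOn hsphne
    hcont.continuousOn
  have hznorm : ‖z‖ = 1 := by simpa using hz
  have hzne : z ≠ 0 := by intro h; rw [h] at hznorm; simp at hznorm
  set m : ℝ := φ x z with hm
  have hmpos : 0 < m := by
    rcases (hnn z).lt_or_eq with h | h
    · exact h
    · exact absurd ((hzero z).mp h.symm) hzne
  have hlb : ∀ v : Euc n, m * ‖v‖ ≤ φ x v := by
    intro v
    rcases eq_or_ne v 0 with rfl | hv
    · simp [φ0]
    · have hvn : 0 < ‖v‖ := norm_pos_iff.mpr hv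
      have hmem : (‖v‖⁻¹ • v) ∈ Metric.sphere (0 : Euc n) 1 := by
        simp [norm_smul, abs_of_pos (inv_pos.mpr hvn), inv_mul_cancel₀ hvn.ne']
      have this2 : m ≤ φ x (‖v‖⁻¹ • v) := hmin hmem
      have heq : φ x (‖v‖⁻¹ • v) = ‖v‖⁻¹ * φ x v := by
        rw [hsmul, abs_of_pos (inv_pos.mpr hvn)]
      rw [heq] at this2
      rename' this2 => this
      calc m * ‖v‖ ≤ (‖v‖⁻¹ * φ x v) * ‖v‖ :=
            mul_le_mul_of_nonneg_right this hvn.le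
        _ = φ x v := by field_simp
  -- key inequality: ⟪T, p⟫ ≤ φ x p
  have hbdd : BddAbove {r | ∃ p : Euc n, φ x p ≤ 1 ∧ r = ⟪T, p⟫} := by
    refine ⟨‖T‖ * m⁻¹, ?_⟩
    rintro r ⟨p, hp, rfl⟩
    have hpn : ‖p‖ ≤ m⁻¹ := by
      have h := (hlb p).trans hp
      have h2 := mul_le_mul_of_nonneg_left h (inv_nonneg.mpr hmpos.le)
      calc ‖p‖ = m⁻¹ * (m * ‖p‖) := by field_simp
        _ ≤ m⁻¹ * 1 := h2
        _ = m⁻¹ := mul_one _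
    calc ⟪T, p⟫ ≤ ‖T‖ * ‖p‖ := real_inner_le_norm T p
      _ ≤ ‖T‖ * m⁻¹ := mul_le_mul_of_nonneg_left hpn (norm_nonneg _)
  have hkey : ∀ p : Euc n, ⟪T, p⟫ ≤ φ x p := by
    intro p
    rcases eq_or_ne p 0 with rfl | hp
    · simp [φ0]
    · have ha : 0 < φ x p := by
        rcases (hnn p).lt_or_eq with h | h
        · exact h
        · exact absurd ((hzero p).mp h.symm) hp
      set a := φ x p with hadef
      have hq : φ x (a⁻¹ • p) ≤ 1 := by
        rw [hsmul, abs_of_pos (inv_pos.mpr ha), inv_mul_cancel₀ ha.ne']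
      have hmem : ⟪T, a⁻¹ • p⟫ ∈ {r | ∃ q : Euc n, φ x q ≤ 1 ∧ r = ⟪T, q⟫} :=
        ⟨a⁻¹ • p, hq, rfl⟩
      have hle : ⟪T, a⁻¹ • p⟫ ≤ 1 := (le_csSup hbdd hmem).trans hd
      rw [real_inner_smul_right] at hle
      calc ⟪T, p⟫ = a * (a⁻¹ * ⟪T, p⟫) := by field_simp
        _ ≤ a * 1 := mul_le_mul_of_nonneg_left hle ha.le
        _ = a := mul_one a
  -- main argument
  have hv1ne : v1 ≠ 0 := fun h => by rw [h] at hn1; simp at hn1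
  have hv2ne : v2 ≠ 0 := fun h => by rw [h] at hn2; simp at hn2
  have ha : 0 < φ x v1 := by
    rcases (hnn v1).lt_or_eq with h | h
    · exact h
    · exact absurd ((hzero v1).mp h.symm) hv1ne
  have hb : 0 < φ x v2 := by
    rcases (hnn v2).lt_or_eq with h | h
    · exact h
    · exact absurd ((hzero v2).mp h.symm) hv2ne
  set a := φ x v1 with hadef
  set b := φ x v2 with hbdef
  set p := a⁻¹ • v1 with hpdef
  set q := b⁻¹ • v2 with hqdef
  have hφp : φ x p = 1 := by
    rw [hpdef, hsmul, abs_of_pos (inv_pos.mpr ha), inv_mul_cancel₀ ha.ne']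
  have hφq : φ x q = 1 := by
    rw [hqdef, hsmul, abs_of_pos (inv_pos.mpr hb), inv_mul_cancel₀ hb.ne']
  have hTp : ⟪T, p⟫ = 1 := by
    rw [hpdef, real_inner_smul_right, ← he1, inv_mul_cancel₀ ha.ne']
  have hTq : ⟪T, q⟫ = 1 := by
    rw [hqdef, real_inner_smul_right, ← he2, inv_mul_cancel₀ hb.ne']
  have hpq : p = q := by
    by_contra hne
    have hlt := hs p q hφp hφq hne
    have : ⟪T, (1/2 : ℝ) • (p + q)⟫ = 1 := by
      rw [real_inner_smul_right, inner_add_right, hTp, hTq]; norm_num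
    have := hkey ((1/2 : ℝ) • (p + q))
    linarith
  have hnp : ‖p‖ = a⁻¹ := by
    rw [hpdef, norm_smul, hn1, mul_one, Real.norm_eq_abs, abs_of_pos (inv_pos.mpr ha)]
  have hnq : ‖q‖ = b⁻¹ := by
    rw [hqdef, norm_smul, hn2, mul_one, Real.norm_eq_abs, abs_of_pos (inv_pos.mpr hb)]
  have hab : a = b := by
    have : a⁻¹ = b⁻¹ := by rw [← hnp, ← hnq, hpq]
    exact inv_injective this
  calc v1 = a • p := by rw [hpdef, smul_smul, mul_inv_cancel₀ ha.ne', one_smul]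
    _ = b • q := by rw [hab, hpq]
    _ = v2 := by rw [hqdef, smul_smul, mul_inv_cancel₀ hb.ne', one_smul]

/-- If two BV functions `w₁, w₂` (with polar decompositions `Dwᵢ = vᵢ |Dwᵢ|`) both
satisfy the calibration identity `φ(x, vᵢ(x)) = T(x)·vᵢ(x)` for the same field `T`
with `φ⁰(x,T) ≤ 1`, and `φ(x,·)` is strictly convex, then wherever `|Dw₁|` and
`|Dw₂|` are mutually absolutely continuous with respect to a common measure `μ` and
`T ≠ 0`, the unit directions agree: `v₁ = v₂` `μ`-a.e. -/
theorem stmt18 {n : ℕ} (Ω : Set (Euc n)) (hΩo : IsOpen Ω) (hΩb : Bornology.IsBounded Ω)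
    (φ : Euc n → Euc n → ℝ)
    (hnorm : ∀ x ∈ Ω, IsNormAt φ x)
    -- strict convexity of each norm φ(x,·)
    (hstrict : ∀ x ∈ Ω, ∀ p q : Euc n, φ x p = 1 → φ x q = 1 → p ≠ q →
      φ x ((1/2 : ℝ) • (p + q)) < 1)
    (T : Euc n → Euc n) (CT : ℝ) (hTb : ∀ x, ‖T x‖ ≤ CT)
    (hdual : ∀ x ∈ Ω, dualNorm φ x (T x) ≤ 1)
    (μ Dw1Abs Dw2Abs : Measure (Euc n))
    (h1 : μ ≪ Dw1Abs) (h1' : Dw1Abs ≪ μ) (h2 : μ ≪ Dw2Abs) (h2' : Dw2Abs ≪ μ)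
    (v1 v2 : Euc n → Euc n)
    (hv1 : ∀ᵐ x ∂Dw1Abs, x ∈ Ω ∧ ‖v1 x‖ = 1 ∧ φ x (v1 x) = ⟪T x, v1 x⟫)
    (hv2 : ∀ᵐ x ∂Dw2Abs, x ∈ Ω ∧ ‖v2 x‖ = 1 ∧ φ x (v2 x) = ⟪T x, v2 x⟫) :
    ∀ᵐ x ∂μ, T x ≠ 0 → v1 x = v2 x := by
  have hv1' : ∀ᵐ x ∂μ, x ∈ Ω ∧ ‖v1 x‖ = 1 ∧ φ x (v1 x) = ⟪T x, v1 x⟫ := h1.ae_le hv1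
  have hv2' : ∀ᵐ x ∂μ, x ∈ Ω ∧ ‖v2 x‖ = 1 ∧ φ x (v2 x) = ⟪T x, v2 x⟫ := h2.ae_le hv2
  filter_upwards [hv1', hv2'] with x hx1 hx2 _
  obtain ⟨hxΩ, hn1, he1⟩ := hx1
  obtain ⟨_, hn2, he2⟩ := hx2
  exact key_pointwise φ x (hnorm x hxΩ) (hstrict x hxΩ) (T x) (hdual x hxΩ)
    (v1 x) (v2 x) hn1 he1 hn2 he2
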